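/- Let μ be a partition with ℓ(μ) ≤ n and let m = (m_1, …, m_n) be a weakly increasing sequence of positive integers. Set b_c := 0 for all integers c ≤ 0. Then for all 1 ≤ i, j ≤ n, P_{i,j}^{μ,m}(x | b) := Σ_{r=0}^{μ_i+j−i} (−1)^r e_r(b_1,…,b_{μ_i+m_i−i}) h_{μ_i+j−i−r}(x_1,…,x_{m_i}) equals Σ_L w(L), the sum over directed up-right lattice paths L from (−j+1, 1) to (μ_i−i+1, m_i), where a horizontal step from (r,t) to (r+1,t) has weight x_t − b_{r+t} and w(L) is the product of weights of the horizontal steps of L. -/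

import Mathlib

open scoped Classical

noncomputable section

/-- The elementary symmetric polynomial `e_r(b_1, …, b_c)` (variables indexed from 1). -/
def epoly {R : Type} [CommRing R] (r c : ℕ) (b : ℕ → R) : R :=
  ∑ S ∈ (Finset.Icc 1 c).powersetCard r, ∏ i ∈ S, b i

/-- The complete homogeneous symmetric polynomial `h_k(x_1, …, x_m)`
(variables indexed from 1). -/
def hpoly {R : Type} [CommRing R] (k m : ℕ) (x : ℕ → R) : R :=
  ∑ α ∈ Finset.Nat.antidiagonalTuple m k, ∏ i : Fin m, x ((i : ℕ) + 1) ^ α i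

/-- The matrix entry `P_{i,j}^{μ,m}(x | b) = Σ_{r=0}^{μ_i+j-i} (-1)^r
e_r(b_1,…,b_{μ_i+m_i-i}) h_{μ_i+j-i-r}(x_1,…,x_{m_i})`, equal to `0` when `μ_i + j - i < 0`
(indices `i`, `j` 1-indexed in the mathematics, matrix indices `i j : Fin n` 0-indexed,
so `μ_i + j - i` reads `μ.rowLen i + j - i`). -/
def Pmat {R : Type} [CommRing R] (n : ℕ) (μ : YoungDiagram) (m : ℕ → ℕ)
    (x b : ℕ → R) (i j : Fin n) : R :=
  if μ.rowLen (i : ℕ) + (j : ℕ) < (i : ℕ) then 0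
  else
    ∑ r ∈ Finset.range (μ.rowLen (i : ℕ) + (j : ℕ) - (i : ℕ) + 1),
      (-1) ^ r * epoly r (μ.rowLen (i : ℕ) + m (i : ℕ) - ((i : ℕ) + 1)) b *
        hpoly (μ.rowLen (i : ℕ) + (j : ℕ) - (i : ℕ) - r) (m (i : ℕ)) x

/-- A directed lattice path of length `len` in `ℤ × ℤ` from `A` to `B`, using unit right
steps `(r,t) → (r+1,t)` and unit up steps `(r,t) → (r,t+1)`, encoded as the sequence of its
vertices (constantly `B` after step `len`, so that the path is determined by finitely many
values). -/
def IsLatticePath (len : ℕ) (A B : ℤ × ℤ) (L : ℕ → ℤ × ℤ) : Prop :=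
  L 0 = A ∧ (∀ k, len ≤ k → L k = B) ∧
    ∀ k, k < len → L (k + 1) = ((L k).1 + 1, (L k).2) ∨ L (k + 1) = ((L k).1, (L k).2 + 1)

/-- The weight of a lattice path: the product over its horizontal steps `(r,t) → (r+1,t)` of
`x t - b (r + t)`. -/
def pathWeight {R : Type} [CommRing R] (len : ℕ) (x b : ℤ → R) (L : ℕ → ℤ × ℤ) : R :=
  ∏ k ∈ Finset.range len,
    if L (k + 1) = ((L k).1 + 1, (L k).2) then x (L k).2 - b ((L k).1 + (L k).2) else 1

/-- The polynomial ring `ℚ[x_0, x_1, …; b_0, b_1, …]`. -/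
abbrev R8 : Type := MvPolynomial (ℕ ⊕ ℕ) ℚ

/-- The indeterminates `x i`. -/
def xv : ℕ → R8 := fun i => MvPolynomial.X (Sum.inl i)

/-- The indeterminates `b c`. -/
def bv : ℕ → R8 := fun c => MvPolynomial.X (Sum.inr c)

/-- The indeterminates `x`, extended to integer indices (only positive indices are used). -/
def xZ : ℤ → R8 := fun c => if c ≤ 0 then 0 else xv c.toNat

/-- The parameters `b`, extended by `b_c := 0` for integers `c ≤ 0`. -/
def bZ : ℤ → R8 := fun c => if c ≤ 0 then 0 else bv c.toNat

section Algebra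
variable {R : Type} [CommRing R]

def egZ (b : ℤ → R) : ℤ → ℕ → ℕ → R
  | _, _, 0 => 1
  | _, 0, _+1 => 0
  | lo, len+1, r+1 => b lo * egZ b (lo+1) len r + egZ b (lo+1) len (r+1)

@[simp] lemma egZ_zero_r (b : ℤ → R) (lo : ℤ) (len : ℕ) : egZ b lo len 0 = 1 := by
  cases len <;> simp [egZ]

@[simp] lemma egZ_zero_len (b : ℤ → R) (lo : ℤ) (r : ℕ) :
    egZ b lo 0 (r+1) = 0 := by simp [egZ]

lemma egZ_succ (b : ℤ → R) (lo : ℤ) (len r : ℕ) :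
    egZ b lo (len+1) (r+1) = b lo * egZ b (lo+1) len r + egZ b (lo+1) len (r+1) := by
  simp [egZ]

lemma egZ_vanish (b : ℤ → R) : ∀ (len : ℕ) (lo : ℤ) (r : ℕ), len < r → egZ b lo len r = 0 := by
  intro len
  induction len with
  | zero => intro lo r h; cases r with
    | zero => omega
    | succ r => simp
  | succ len ih =>
    intro lo r h
    cases r with
    | zero => omega
    | succ r =>
      rw [egZ_succ, ih (lo+1) r (by omega), ih (lo+1) (r+1) (by omega)]
      ring

lemma egZ_snoc (b : ℤ → R) : ∀ (len : ℕ) (lo : ℤ) (r : ℕ),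
    egZ b lo (len+1) (r+1) = egZ b lo len (r+1) + b (lo+len) * egZ b lo len r := by
  intro len
  induction len with
  | zero =>
    intro lo r
    cases r <;> simp [egZ]
  | succ len ih =>
    intro lo r
    have hc : (lo+1) + (len:ℤ) = lo + ((len:ℕ)+1:ℕ) := by push_cast; ring
    cases r with
    | zero =>
      rw [egZ_succ b lo (len+1) 0, ih (lo+1) 0, egZ_succ b lo len 0]
      simp only [egZ_zero_r]
      rw [hc]
      ring
    | succ r =>
      rw [egZ_succ b lo (len+1) (r+1), ih (lo+1) r, ih (lo+1) (r+1),
        egZ_succ b lo len (r+1), egZ_succ b lo len r]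
      rw [hc]
      ring

def hgZ (x : ℤ → R) : ℤ → ℕ → ℕ → R
  | _, _, 0 => 1
  | _, 0, _+1 => 0
  | s, len+1, k+1 => x s * hgZ x s (len+1) k + hgZ x (s+1) len (k+1)
termination_by s len k => (len, k)

@[simp] lemma hgZ_zero_k (x : ℤ → R) (s : ℤ) (len : ℕ) : hgZ x s len 0 = 1 := by
  cases len <;> simp [hgZ]

@[simp] lemma hgZ_zero_len (x : ℤ → R) (s : ℤ) (k : ℕ) :
    hgZ x s 0 (k+1) = 0 := by simp [hgZ]

lemma hgZ_succ (x : ℤ → R) (s : ℤ) (len k : ℕ) :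
    hgZ x s (len+1) (k+1) = x s * hgZ x s (len+1) k + hgZ x (s+1) len (k+1) := by
  simp [hgZ]

def Gfun (x b : ℤ → R) (c t : ℤ) (H V : ℕ) : R :=
  ∑ r ∈ Finset.range (H+1), (-1:R)^r * egZ b (c+t) (H+V) r * hgZ x t (V+1) (H-r)

@[simp] lemma Gfun_H0 (x b : ℤ → R) (c t : ℤ) (V : ℕ) : Gfun x b c t 0 V = 1 := by
  simp [Gfun]

lemma sum_peel (Eb E' h : ℕ → R) (b₀ : R) (n : ℕ)
    (hEb0 : Eb 0 = 1) (hE0 : E' 0 = 1)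
    (hEb : ∀ i, Eb (i+1) = b₀ * E' i + E' (i+1)) :
    ∑ r ∈ Finset.range (n+1+1), (-1:R)^r * Eb r * h (n+1-r)
      = -(b₀ * ∑ r ∈ Finset.range (n+1), (-1:R)^r * E' r * h (n-r))
        + ∑ r ∈ Finset.range (n+1+1), (-1:R)^r * E' r * h (n+1-r) := by
  rw [Finset.sum_range_succ' (fun r => (-1:R)^r * Eb r * h (n+1-r)) (n+1),
      Finset.sum_range_succ' (fun r => (-1:R)^r * E' r * h (n+1-r)) (n+1)]
  simp only [Nat.add_sub_add_right, Nat.sub_zero, pow_zero, hEb0, hE0, one_mul]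
  have hterm : ∀ i ∈ Finset.range (n+1),
      (-1:R)^(i+1) * Eb (i+1) * h (n-i)
        = -(b₀ * ((-1:R)^i * E' i * h (n-i))) + (-1:R)^(i+1) * E' (i+1) * h (n-i) := by
    intro i _
    rw [hEb]; ring
  rw [Finset.sum_congr rfl hterm, Finset.sum_add_distrib, Finset.sum_neg_distrib,
    ← Finset.mul_sum]
  ring

lemma sum_hsplit (E' h h2 : ℕ → R) (xt : R) (n : ℕ)
    (hsp : ∀ k, h (k+1) = xt * h k + h2 (k+1)) (hb : h 0 = h2 0) :
    ∑ r ∈ Finset.range (n+1+1), (-1:R)^r * E' r * h (n+1-r)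
      = xt * (∑ r ∈ Finset.range (n+1), (-1:R)^r * E' r * h (n-r))
        + ∑ r ∈ Finset.range (n+1+1), (-1:R)^r * E' r * h2 (n+1-r) := by
  rw [Finset.sum_range_succ (fun r => (-1:R)^r * E' r * h (n+1-r)) (n+1),
      Finset.sum_range_succ (fun r => (-1:R)^r * E' r * h2 (n+1-r)) (n+1)]
  have hterm : ∀ r ∈ Finset.range (n+1),
      (-1:R)^r * E' r * h (n+1-r)
        = xt * ((-1:R)^r * E' r * h (n-r)) + (-1:R)^r * E' r * h2 (n+1-r) := by
    intro r hr
    have h1 : n+1-r = (n-r)+1 := by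
      have := Finset.mem_range.mp hr; omega
    rw [h1, hsp]; ring
  rw [Finset.sum_congr rfl hterm, Finset.sum_add_distrib, ← Finset.mul_sum]
  simp only [Nat.sub_self, hb]
  ring

/-- indicator of `k = 0`. -/
def ind0 : ℕ → R := fun k => if k = 0 then 1 else 0

@[simp] lemma ind0_zero : (ind0 0 : R) = 1 := rfl
@[simp] lemma ind0_succ (k : ℕ) : (ind0 (k+1) : R) = 0 := rfl

lemma Gfun_recA (x b : ℤ → R) (c t : ℤ) (H V : ℕ) :
    Gfun x b c t (H+1) (V+1)
      = (x t - b (c+t)) * Gfun x b (c+1) t H (V+1) + Gfun x b c (t+1) (H+1) V := by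
  have hct : c + 1 + t = c + t + 1 := by ring
  have hct2 : c + (t + 1) = c + t + 1 := by ring
  have e1 : H + 1 + (V + 1) = (H + V + 1) + 1 := by omega
  have e2 : H + (V + 1) = H + V + 1 := by omega
  have e3 : H + 1 + V = H + V + 1 := by omega
  simp only [Gfun, hct, hct2, e1, e2, e3]
  rw [sum_peel (egZ b (c+t) (H+V+1+1)) (egZ b (c+t+1) (H+V+1)) (hgZ x t (V+1+1)) (b (c+t)) H
      (by simp) (by simp) (fun i => egZ_succ b (c+t) (H+V+1) i),
    sum_hsplit (egZ b (c+t+1) (H+V+1)) (hgZ x t (V+1+1)) (hgZ x (t+1) (V+1)) (x t) H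
      (fun k => hgZ_succ x t (V+1) k) (by simp)]
  ring

lemma Gfun_recB (x b : ℤ → R) (c t : ℤ) (H : ℕ) :
    Gfun x b c t (H+1) 0 = (x t - b (c+t)) * Gfun x b (c+1) t H 0 := by
  have hct : c + 1 + t = c + t + 1 := by ring
  simp only [Gfun, hct, Nat.add_zero]
  rw [sum_peel (egZ b (c+t) (H+1)) (egZ b (c+t+1) H) (hgZ x t (0+1)) (b (c+t)) H
      (by simp) (by simp) (fun i => egZ_succ b (c+t) H i),
    sum_hsplit (egZ b (c+t+1) H) (hgZ x t (0+1)) ind0 (x t) H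
      (fun k => by rw [hgZ_succ]; simp) (by simp)]
  have hz : ∑ r ∈ Finset.range (H+1+1), (-1:R)^r * egZ b (c+t+1) H r * ind0 (H+1-r) = 0 := by
    apply Finset.sum_eq_zero
    intro r hr
    rcases Nat.lt_or_ge r (H+1) with h | h
    · have h2 : H+1-r ≠ 0 := by omega
      simp [ind0, h2]
    · have hr' : r = H+1 := by have := Finset.mem_range.mp hr; omega
      subst hr'
      rw [egZ_vanish b H (c+t+1) (H+1) (by omega)]
      ring
  rw [hz]
  ring

end Algebra


section Path
variable {R : Type} [CommRing R]

lemma path_displacement {len : ℕ} {A B : ℤ × ℤ} {L : ℕ → ℤ × ℤ}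
    (h : IsLatticePath len A B L) :
    A.1 ≤ B.1 ∧ A.2 ≤ B.2 ∧ B.1 + B.2 = A.1 + A.2 + len := by
  obtain ⟨h0, hB, hs⟩ := h
  have key : ∀ k, k ≤ len →
      A.1 ≤ (L k).1 ∧ A.2 ≤ (L k).2 ∧ (L k).1 + (L k).2 = A.1 + A.2 + k := by
    intro k
    induction k with
    | zero => intro _; rw [h0]; simp
    | succ k ih =>
      intro hk
      obtain ⟨ha, hb', hc⟩ := ih (by omega)
      rcases hs k (by omega) with hst | hst <;> rw [hst] <;> simp <;> push_cast <;> omega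
  have hfin := key len le_rfl
  rw [hB len le_rfl] at hfin
  exact ⟨hfin.1, hfin.2.1, hfin.2.2⟩

lemma path_finite (len : ℕ) (A B : ℤ × ℤ) :
    {L : ℕ → ℤ × ℤ | IsLatticePath len A B L}.Finite := by
  apply Set.Finite.of_finite_image
    (f := fun (L : ℕ → ℤ × ℤ) (k : Fin len) =>
      if L ((k : ℕ) + 1) = ((L (k : ℕ)).1 + 1, (L (k : ℕ)).2) then true else false)
  · exact Set.toFinite _
  · intro L hL L' hL' hEq
    obtain ⟨h0, hB, hs⟩ := hL
    obtain ⟨h0', hB', hs'⟩ := hL'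
    have key : ∀ k, k ≤ len → L k = L' k := by
      intro k
      induction k with
      | zero => intro _; rw [h0, h0']
      | succ k ih =>
        intro hk
        have hkk := ih (by omega)
        have hb3 : (if L (k+1) = ((L k).1 + 1, (L k).2) then true else false)
            = (if L' (k+1) = ((L' k).1 + 1, (L' k).2) then true else false) :=
          congrFun hEq (⟨k, by omega⟩ : Fin len)
        rcases hs k (by omega) with h1 | h1 <;> rcases hs' k (by omega) with h2 | h2
        · rw [h1, h2, hkk]
        · exfalso; rw [h1, h2] at hb3; simp [Prod.ext_iff] at hb3
        · exfalso; rw [h1, h2] at hb3; simp [Prod.ext_iff] at hb3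
        · rw [h1, h2, hkk]
    funext k
    rcases le_or_gt k len with h | h
    · exact key k h
    · rw [hB k h.le, hB' k h.le]

lemma filter_shift_sum (x b : ℤ → R) (n : ℕ) (A A' B : ℤ × ℤ)
    (hstep : A' = (A.1 + 1, A.2) ∨ A' = (A.1, A.2 + 1)) :
    ∑ L ∈ (path_finite (n+1) A B).toFinset.filter (fun L => L 1 = A'),
        pathWeight (n+1) x b L
      = (if A' = (A.1 + 1, A.2) then x A.2 - b (A.1 + A.2) else 1)
          * ∑ L ∈ (path_finite n A' B).toFinset, pathWeight n x b L := by
  rw [Finset.mul_sum]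
  refine Finset.sum_nbij' (fun L (k : ℕ) => L (k+1))
    (fun L' k => match k with | 0 => A | (k'+1) => L' k') ?_ ?_ ?_ ?_ ?_
  · intro L hL
    rw [Finset.mem_filter, Set.Finite.mem_toFinset, Set.mem_setOf_eq] at hL
    obtain ⟨⟨h0, hB, hs⟩, h1⟩ := hL
    rw [Set.Finite.mem_toFinset, Set.mem_setOf_eq]
    exact ⟨h1, fun k hk => hB (k+1) (by omega), fun k hk => hs (k+1) (by omega)⟩
  · intro L' hL'
    rw [Set.Finite.mem_toFinset, Set.mem_setOf_eq] at hL'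
    obtain ⟨h0, hB, hs⟩ := hL'
    rw [Finset.mem_filter, Set.Finite.mem_toFinset, Set.mem_setOf_eq]
    refine ⟨⟨rfl, fun k hk => ?_, fun k hk => ?_⟩, h0⟩
    · match k, hk with
      | (k'+1), hk => exact hB k' (by omega)
    · match k with
      | 0 =>
        show L' 0 = _ ∨ L' 0 = _
        rcases hstep with h | h
        · exact Or.inl (by rw [h0, h])
        · exact Or.inr (by rw [h0, h])
      | (k'+1) => exact hs k' (by omega)
  · intro L hL
    rw [Finset.mem_filter, Set.Finite.mem_toFinset, Set.mem_setOf_eq] at hL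
    funext k
    match k with
    | 0 => exact hL.1.1.symm
    | (k'+1) => rfl
  · intro L' _
    funext k
    match k with
    | 0 => rfl
    | (k'+1) => rfl
  · intro L hL
    rw [Finset.mem_filter, Set.Finite.mem_toFinset, Set.mem_setOf_eq] at hL
    obtain ⟨⟨h0, hB, hs⟩, h1⟩ := hL
    calc pathWeight (n+1) x b L
        = pathWeight n x b (fun k => L (k+1))
            * (if L (0+1) = ((L 0).1 + 1, (L 0).2) then x (L 0).2 - b ((L 0).1 + (L 0).2) else 1) := by
          rw [pathWeight, Finset.prod_range_succ']
          rfl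
      _ = (if A' = (A.1 + 1, A.2) then x A.2 - b (A.1 + A.2) else 1)
            * pathWeight n x b (fun k => L (k+1)) := by
          rw [mul_comm]
          congr 1
          rw [show L (0+1) = A' from h1, h0]
      _ = _ := rfl

lemma pathSum_step (x b : ℤ → R) (n : ℕ) (a1 a2 : ℤ) (B : ℤ × ℤ) :
    ∑ᶠ L ∈ {L : ℕ → ℤ × ℤ | IsLatticePath (n+1) (a1, a2) B L}, pathWeight (n+1) x b L
      = (x a2 - b (a1 + a2))
          * ∑ᶠ L ∈ {L : ℕ → ℤ × ℤ | IsLatticePath n (a1 + 1, a2) B L}, pathWeight n x b L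
        + ∑ᶠ L ∈ {L : ℕ → ℤ × ℤ | IsLatticePath n (a1, a2 + 1) B L}, pathWeight n x b L := by
  rw [finsum_mem_eq_finite_toFinset_sum _ (path_finite (n+1) (a1, a2) B),
      finsum_mem_eq_finite_toFinset_sum _ (path_finite n (a1 + 1, a2) B),
      finsum_mem_eq_finite_toFinset_sum _ (path_finite n (a1, a2 + 1) B)]
  rw [← Finset.sum_filter_add_sum_filter_not ((path_finite (n+1) (a1, a2) B).toFinset)
        (fun L => L 1 = (a1 + 1, a2)) (pathWeight (n+1) x b)]
  have hfc : ((path_finite (n+1) (a1, a2) B).toFinset.filter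
        (fun L => ¬ (L 1 = (a1 + 1, a2))))
      = (path_finite (n+1) (a1, a2) B).toFinset.filter (fun L => L 1 = (a1, a2 + 1)) := by
    apply Finset.filter_congr
    intro L hL
    rw [Set.Finite.mem_toFinset, Set.mem_setOf_eq] at hL
    obtain ⟨h0, hB, hs⟩ := hL
    have hd := hs 0 (by omega)
    rw [h0] at hd
    constructor
    · intro hne
      rcases hd with h | h
      · exact absurd h hne
      · exact h
    · intro h hno
      rw [h] at hno
      have : a2 + 1 = a2 := (Prod.ext_iff.mp hno).2
      omega
  rw [hfc]
  rw [filter_shift_sum x b n (a1, a2) (a1 + 1, a2) B (Or.inl rfl),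
      filter_shift_sum x b n (a1, a2) (a1, a2 + 1) B (Or.inr rfl)]
  have hne : ((a1, a2 + 1) : ℤ × ℤ) ≠ (a1 + 1, a2) := by
    intro h
    have := (Prod.ext_iff.mp h).1
    omega
  rw [if_pos rfl, if_neg hne, one_mul]

end Path

section Main
variable {R : Type} [CommRing R]

lemma pathSum_eq (x b : ℤ → R) (N : ℕ) : ∀ (H V : ℕ) (c t : ℤ), H + V = N →
    (∑ᶠ L ∈ {L : ℕ → ℤ × ℤ | IsLatticePath (H+V) (c, t) (c + (H:ℤ), t + (V:ℤ)) L},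
      pathWeight (H+V) x b L) = Gfun x b c t H V := by
  induction N with
  | zero =>
    intro H V c t hN
    have hH : H = 0 := by omega
    have hV : V = 0 := by omega
    subst hH; subst hV
    have hB : ((c + ((0:ℕ):ℤ), t + ((0:ℕ):ℤ)) : ℤ × ℤ) = (c, t) := by push_cast; simp
    rw [hB]
    have hset : {L : ℕ → ℤ × ℤ | IsLatticePath (0+0) (c,t) (c,t) L}
        = {fun _ => ((c,t) : ℤ × ℤ)} := by
      ext L
      simp only [Set.mem_setOf_eq, Set.mem_singleton_iff, IsLatticePath]
      constructor
      · rintro ⟨h0, hB', _⟩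
        funext k
        exact hB' k (by omega)
      · rintro rfl
        exact ⟨rfl, fun k _ => rfl, fun k hk => by omega⟩
    rw [hset, finsum_mem_singleton]
    simp [pathWeight, Gfun]
  | succ N ih =>
    intro H V c t hN
    rw [show H + V = N + 1 from hN]
    rw [pathSum_step x b N c t (c + (H:ℤ), t + (V:ℤ))]
    cases H with
    | zero =>
      have hV : V = N + 1 := by omega
      subst hV
      have hempty : {L : ℕ → ℤ × ℤ |
          IsLatticePath N (c+1, t) (c + ((0:ℕ):ℤ), t + ((N+1:ℕ):ℤ)) L} = ∅ := by
        apply Set.eq_empty_iff_forall_notMem.mpr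
        intro L hL
        have hd := (path_displacement hL).1
        simp at hd
      rw [hempty, finsum_mem_empty, mul_zero, zero_add]
      have h2 : (t+1) + (N:ℤ) = t + ((N+1:ℕ):ℤ) := by push_cast; ring
      have i2 := ih 0 N c (t+1) (by omega)
      rw [show (0:ℕ) + N = N from by omega, h2] at i2
      rw [i2]
      simp
    | succ H' =>
      cases V with
      | zero =>
        have hempty : {L : ℕ → ℤ × ℤ |
            IsLatticePath N (c, t+1) (c + ((H'+1:ℕ):ℤ), t + ((0:ℕ):ℤ)) L} = ∅ := by
          apply Set.eq_empty_iff_forall_notMem.mpr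
          intro L hL
          have hd := (path_displacement hL).2.1
          simp at hd
        rw [hempty, finsum_mem_empty, add_zero]
        have h2 : (c+1) + (H':ℤ) = c + ((H'+1:ℕ):ℤ) := by push_cast; ring
        have i1 := ih H' 0 (c+1) t (by omega)
        rw [show H' + 0 = N from by omega, h2] at i1
        rw [i1]
        exact (Gfun_recB x b c t H').symm
      | succ V' =>
        have h2 : (c+1) + (H':ℤ) = c + ((H'+1:ℕ):ℤ) := by push_cast; ring
        have h3 : (t+1) + (V':ℤ) = t + ((V'+1:ℕ):ℤ) := by push_cast; ring
        have i1 := ih H' (V'+1) (c+1) t (by omega)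
        rw [show H' + (V'+1) = N from by omega, h2] at i1
        have i2 := ih (H'+1) V' c (t+1) (by omega)
        rw [show H' + 1 + V' = N from by omega, h3] at i2
        rw [i1, i2]
        exact (Gfun_recA x b c t H' V').symm

end Main
section Bridge
variable {R : Type} [CommRing R]

@[simp] lemma epoly_zero (c : ℕ) (b : ℕ → R) : epoly 0 c b = 1 := by
  simp [epoly]

@[simp] lemma epoly_zero_c (r : ℕ) (b : ℕ → R) : epoly (r+1) 0 b = 0 := by
  unfold epoly
  rw [Finset.Icc_eq_empty (by omega), Finset.powersetCard_eq_empty.mpr (by simp)]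
  simp

lemma epoly_succ (r c : ℕ) (b : ℕ → R) :
    epoly (r+1) (c+1) b = epoly (r+1) c b + b (c+1) * epoly r c b := by
  have hnm : (c+1) ∉ Finset.Icc 1 c := by simp
  have hic : Finset.Icc 1 (c+1) = insert (c+1) (Finset.Icc 1 c) :=
    (Finset.insert_Icc_right_eq_Icc_add_one (by omega)).symm
  unfold epoly
  rw [hic, Finset.powersetCard_succ_insert hnm]
  rw [Finset.sum_union ?disj, Finset.sum_image ?inj]
  · congr 1
    rw [Finset.mul_sum]
    apply Finset.sum_congr rfl
    intro S hS
    have hS' : (c+1) ∉ S := fun h => hnm ((Finset.mem_powersetCard.mp hS).1 h)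
    rw [Finset.prod_insert hS']
  case disj =>
    rw [Finset.disjoint_left]
    intro T hT1 hT2
    obtain ⟨S, _, rfl⟩ := Finset.mem_image.mp hT2
    exact hnm ((Finset.mem_powersetCard.mp hT1).1 (Finset.mem_insert_self _ _))
  case inj =>
    intro S hS S' hS' h
    have hc : (c+1) ∉ S := fun hh => hnm ((Finset.mem_powersetCard.mp hS).1 hh)
    have hc' : (c+1) ∉ S' := fun hh => hnm ((Finset.mem_powersetCard.mp hS').1 hh)
    rw [← Finset.erase_insert hc, ← Finset.erase_insert hc', h]

lemma egZ_bZ_pos : ∀ (len r : ℕ), egZ bZ 1 len r = epoly r len bv := by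
  intro len
  induction len with
  | zero =>
    intro r
    cases r with
    | zero => simp
    | succ r => simp
  | succ len ih =>
    intro r
    cases r with
    | zero => simp
    | succ r =>
      rw [egZ_snoc, ih, ih, epoly_succ]
      have hb : bZ (1 + (len:ℤ)) = bv (len+1) := by
        simp only [bZ, if_neg (by omega : ¬ (1 + (len:ℤ) ≤ 0))]
        congr 1
        omega
      rw [hb]

lemma egZ_zero_lo (b : ℤ → R) (lo : ℤ) (len r : ℕ) (h : b lo = 0) :
    egZ b lo (len+1) r = egZ b (lo+1) len r := by
  cases r with
  | zero => simp
  | succ r => rw [egZ_succ, h]; ring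

lemma egZ_bZ (k : ℕ) : ∀ (len r : ℕ), egZ bZ (1 - (k:ℤ)) len r = epoly r (len - k) bv := by
  induction k with
  | zero =>
    intro len r
    rw [show (1 - ((0:ℕ):ℤ)) = 1 by norm_num, show len - 0 = len from rfl]
    exact egZ_bZ_pos len r
  | succ k ih =>
    intro len r
    cases len with
    | zero =>
      cases r with
      | zero => simp
      | succ r => simp
    | succ len =>
      have hz : bZ (1 - ((k+1:ℕ):ℤ)) = 0 := by
        simp only [bZ, if_pos (by push_cast; omega : (1 - ((k+1:ℕ):ℤ)) ≤ 0)]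
      rw [egZ_zero_lo _ _ _ _ hz,
        show (1 - ((k+1:ℕ):ℤ)) + 1 = 1 - (k:ℤ) from by push_cast; ring, ih len r,
        show len + 1 - (k+1) = len - k from by omega]

lemma hgZ_expand (x : ℤ → R) (s : ℤ) (len : ℕ) : ∀ k : ℕ,
    hgZ x s (len+1) k = ∑ p ∈ Finset.HasAntidiagonal.antidiagonal k, x s ^ p.1 * hgZ x (s+1) len p.2 := by
  intro k
  induction k with
  | zero => simp [Finset.Nat.antidiagonal_zero]
  | succ k ih =>
    rw [hgZ_succ, ih, Finset.Nat.antidiagonal_succ, Finset.sum_cons, Finset.sum_map,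
      Finset.mul_sum]
    simp only [Function.Embedding.prodMap, Function.Embedding.coeFn_mk, Prod.map_apply,
      Function.Embedding.refl_apply, pow_zero, one_mul, Prod.map_fst, Prod.map_snd]
    rw [add_comm]
    congr 1
    apply Finset.sum_congr rfl
    intro p _
    rw [show Nat.succ p.1 = p.1 + 1 from rfl, pow_succ]
    ring

lemma hpoly_succ (k M : ℕ) (x : ℕ → R) :
    hpoly k (M+1) x
      = ∑ p ∈ Finset.HasAntidiagonal.antidiagonal k, x 1 ^ p.1 * hpoly p.2 M (fun i => x (i+1)) := by
  unfold hpoly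
  have hrhs : ∀ p : ℕ × ℕ,
      x 1 ^ p.1 * ∑ α ∈ Finset.Nat.antidiagonalTuple M p.2, ∏ i : Fin M, x ((i:ℕ)+1+1) ^ α i
        = ∑ α ∈ Finset.Nat.antidiagonalTuple M p.2,
            x 1 ^ p.1 * ∏ i : Fin M, x ((i:ℕ)+1+1) ^ α i := by
    intro p; rw [Finset.mul_sum]
  simp only [hrhs]
  rw [Finset.sum_sigma']
  refine Finset.sum_nbij' (fun β => ⟨(β 0, ∑ i : Fin M, β i.succ), fun i => β i.succ⟩)
    (fun σ => Fin.cons σ.1.1 σ.2) ?_ ?_ ?_ ?_ ?_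
  · intro β hβ
    rw [Finset.Nat.mem_antidiagonalTuple] at hβ
    rw [Finset.mem_sigma]
    constructor
    · rw [Finset.HasAntidiagonal.mem_antidiagonal]
      show β 0 + ∑ i : Fin M, β i.succ = k
      rw [← hβ, Fin.sum_univ_succ]
    · rw [Finset.Nat.mem_antidiagonalTuple]
  · intro σ hσ
    rw [Finset.mem_sigma, Finset.HasAntidiagonal.mem_antidiagonal, Finset.Nat.mem_antidiagonalTuple] at hσ
    rw [Finset.Nat.mem_antidiagonalTuple, Fin.sum_univ_succ]
    simp only [Fin.cons_zero, Fin.cons_succ]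
    rw [hσ.2, hσ.1]
  · intro β _
    exact Fin.cons_self_tail β
  · intro σ hσ
    rw [Finset.mem_sigma, Finset.HasAntidiagonal.mem_antidiagonal, Finset.Nat.mem_antidiagonalTuple] at hσ
    simp only [Fin.cons_zero, Fin.cons_succ]
    rcases σ with ⟨⟨p1, p2⟩, α⟩
    simp only at hσ ⊢
    rw [hσ.2]
  · intro β _
    rw [Fin.prod_univ_succ]
    simp only [Fin.val_zero, zero_add, Fin.val_succ]

end Bridge


lemma hgZ_hpoly {R : Type} [CommRing R] (y : ℤ → R) : ∀ (M : ℕ) (s : ℤ) (k : ℕ),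
    hgZ y s M k = hpoly k M (fun i => y (s + i - 1)) := by
  intro M
  induction M with
  | zero =>
    intro s k
    cases k with
    | zero => simp [hpoly]
    | succ k => simp [hpoly]
  | succ M ih =>
    intro s k
    rw [hgZ_expand, hpoly_succ]
    apply Finset.sum_congr rfl
    intro p _
    rw [ih (s+1) p.2]
    congr 1
    · congr 1
      push_cast
      ring
    · congr 1
      funext i
      congr 1
      push_cast
      ring

lemma hpoly_xZ (k M : ℕ) : hpoly k M (fun i => xZ (1 + (i:ℤ) - 1)) = hpoly k M xv := by
  unfold hpoly
  apply Finset.sum_congr rfl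
  intro a _
  apply Finset.prod_congr rfl
  intro i _
  congr 1
  show xZ (1 + ((i:ℕ)+1:ℕ) - 1) = xv ((i:ℕ)+1)
  simp only [xZ]
  rw [if_neg (by push_cast; omega)]
  congr 1
  omega

/-- **Lattice path interpretation of the Jacobi–Trudi entries.** With `b_c := 0` for `c ≤ 0`,
for all `1 ≤ i, j ≤ n`, `P_{i,j}^{μ,m}(x | b)` equals the sum of weights of up-right lattice
paths from `(-j+1, 1)` to `(μ_i - i + 1, m_i)`, where a horizontal step `(r,t) → (r+1,t)`
has weight `x_t - b_{r+t}`. (Matrix indices `i j : Fin n` are 0-indexed versions of the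
1-indexed mathematical indices, so `(-j+1, 1)` reads `(-(j:ℤ), 1)` and
`(μ_i - i + 1, m_i)` reads `((μ.rowLen i : ℤ) - i, m i)`.) -/
theorem Pmat_eq_lattice_path_sum (n : ℕ) (μ : YoungDiagram) (hl : μ.colLen 0 ≤ n)
    (m : ℕ → ℕ) (hmpos : ∀ i, i < n → 1 ≤ m i)
    (hmincr : ∀ i j, i ≤ j → j < n → m i ≤ m j) (i j : Fin n) :
    Pmat n μ m xv bv i j
      = ∑ᶠ L ∈ {L : ℕ → ℤ × ℤ |
          IsLatticePath ((μ.rowLen (i : ℕ) : ℤ) - (i : ℕ) + (j : ℕ) + (m (i : ℕ)) - 1).toNat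
            (-(j : ℤ), 1) ((μ.rowLen (i : ℕ) : ℤ) - (i : ℕ), (m (i : ℕ) : ℤ)) L},
          pathWeight ((μ.rowLen (i : ℕ) : ℤ) - (i : ℕ) + (j : ℕ) + (m (i : ℕ)) - 1).toNat
            xZ bZ L := by
  have hM : 1 ≤ m (i:ℕ) := hmpos i i.isLt
  by_cases hcase : μ.rowLen (i:ℕ) + (j:ℕ) < (i:ℕ)
  · rw [Pmat, if_pos hcase]
    symm
    have hempty : {L : ℕ → ℤ × ℤ |
        IsLatticePath ((μ.rowLen (i : ℕ) : ℤ) - (i : ℕ) + (j : ℕ) + (m (i : ℕ)) - 1).toNat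
          (-(j : ℤ), 1) ((μ.rowLen (i : ℕ) : ℤ) - (i : ℕ), (m (i : ℕ) : ℤ)) L} = ∅ := by
      apply Set.eq_empty_iff_forall_notMem.mpr
      intro L hL
      have hd : (-(j:ℤ)) ≤ (μ.rowLen (i:ℕ) : ℤ) - ((i:ℕ):ℤ) := (path_displacement hL).1
      omega
    rw [hempty, finsum_mem_empty]
  · push_neg at hcase
    set H := μ.rowLen (i:ℕ) + (j:ℕ) - (i:ℕ) with hH
    set V := m (i:ℕ) - 1 with hV
    have hlen : ((μ.rowLen (i : ℕ) : ℤ) - (i : ℕ) + (j : ℕ) + (m (i : ℕ)) - 1).toNat = H + V := by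
      omega
    have hB1 : ((μ.rowLen (i : ℕ) : ℤ) - ((i:ℕ):ℤ)) = (-(j:ℤ)) + (H:ℤ) := by omega
    have hB2 : ((m (i:ℕ) : ℤ)) = 1 + (V:ℤ) := by omega
    rw [hlen, hB1, hB2, pathSum_eq xZ bZ (H+V) H V (-(j:ℤ)) 1 rfl]
    rw [Pmat, if_neg (by omega), ← hH]
    unfold Gfun
    apply Finset.sum_congr rfl
    intro r hr
    congr 1
    · congr 1
      have h1 : (-(j:ℤ)) + 1 = 1 - ((j:ℕ):ℤ) := by push_cast; ring
      rw [h1, egZ_bZ (j:ℕ) (H+V) r]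
      have hE : H + V - (j:ℕ) = μ.rowLen (i:ℕ) + m (i:ℕ) - ((i:ℕ)+1) := by omega
      rw [hE]
    · have h2 : V + 1 = m (i:ℕ) := by omega
      rw [hgZ_hpoly xZ (V+1) 1 (H-r), h2, hpoly_xZ]


end
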